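/- arXiv:1901.07784 — 2 statements merged into one kernel-verified Lean document; each statement's English description precedes it below -/
import Mathlib

section
/- Let m ≥ 3 and let x be a vertex of the Hamming graph H(n,m). The restriction map from the vertex stabilizer G_x (in the full automorphism group G of H(n,m)) to the automorphism group of the induced subgraph on N(x), given by f ↦ f|_{N(x)}, is an injective group homomorphism. -/
/-- The Hamming graph `H(n,m)`: vertices are `n`-tuples over `Fin m`,
adjacent iff they differ in exactly one coordinate. -/
def hammingGraph (n m : ℕ) : SimpleGraph (Fin n → Fin m) where
  Adj x y := hammingDist x y = 1
  symm := by constructor; intro x y h; rwa [hammingDist_comm]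
  loopless := by constructor; intro x h; simp [hammingDist_self] at h

instance graphAutGroup {V : Type*} (G : SimpleGraph V) : Group (G ≃g G) where
  mul a b := b.trans a
  one := SimpleGraph.Iso.refl
  inv := SimpleGraph.Iso.symm
  mul_assoc a b c := rfl
  one_mul a := RelIso.ext fun _ => rfl
  mul_one a := RelIso.ext fun _ => rfl
  inv_mul_cancel a := RelIso.ext fun x => a.symm_apply_apply x


/-- The stabilizer of the vertex `x` in `Aut(H(n,m))`. -/
def hammingStab (n m : ℕ) (x : Fin n → Fin m) :
    Subgroup (hammingGraph n m ≃g hammingGraph n m) where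
  carrier := {f | f x = x}
  one_mem' := rfl
  mul_mem' := by
    intro a b ha hb
    show a (b x) = x
    rw [hb, ha]
  inv_mem' := by
    intro a ha
    show a.symm x = x
    conv_lhs => rw [← ha]
    exact a.symm_apply_apply x

lemma hammingDist_eq_one_iff {n m : ℕ} {a b : Fin n → Fin m} :
    hammingDist a b = 1 ↔ ∃ i, a i ≠ b i ∧ ∀ k, a k ≠ b k → k = i := by
  unfold hammingDist
  rw [Finset.card_eq_one]
  constructor
  · rintro ⟨i, hi⟩
    refine ⟨i, ?_, ?_⟩
    · have : i ∈ ({i} : Finset (Fin n)) := Finset.mem_singleton_self i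
      rw [← hi] at this; simpa using this
    · intro k hk
      have : k ∈ ({i} : Finset (Fin n)) := by rw [← hi]; simpa using hk
      simpa using this
  · rintro ⟨i, hi, huniq⟩
    refine ⟨i, ?_⟩
    ext k
    simp only [Finset.mem_filter, Finset.mem_univ, true_and, Finset.mem_singleton]
    exact ⟨huniq k, fun h => h ▸ hi⟩

lemma dist_update {n m : ℕ} (x y : Fin n → Fin m) (i : Fin n) (h : x i ≠ y i) :
    hammingDist x (Function.update y i (x i)) + 1 = hammingDist x y := by
  unfold hammingDist
  have : (Finset.univ.filter fun k => x k ≠ Function.update y i (x i) k)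
      = (Finset.univ.filter fun k => x k ≠ y k).erase i := by
    ext k
    rcases eq_or_ne k i with rfl | hk
    · simp [Function.update_self]
    · simp [Function.update_of_ne hk, hk]
  rw [this, Finset.card_erase_add_one]
  simp [h]

lemma dist_update_one {n m : ℕ} (x y : Fin n → Fin m) (i : Fin n) (h : x i ≠ y i) :
    hammingDist (Function.update y i (x i)) y = 1 := by
  rw [hammingDist_eq_one_iff]
  refine ⟨i, by simpa [Function.update_self] using h, ?_⟩
  intro k hk
  by_contra hki
  exact hk (by simp [Function.update_of_ne hki])


lemma fix_all {n m : ℕ} (f : hammingGraph n m ≃g hammingGraph n m)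
    (x : Fin n → Fin m) (hx : f x = x)
    (hN : ∀ y, hammingDist x y = 1 → f y = y) :
    ∀ y, f y = y := by
  suffices H : ∀ d y, hammingDist x y = d → f y = y by
    intro y; exact H _ y rfl
  intro d
  induction d using Nat.strong_induction_on with
  | _ d ih =>
    intro y hd
    match d, hd with
    | 0, hd =>
      have hxy : x = y := hammingDist_eq_zero.mp hd
      rw [← hxy, hx]
    | 1, hd => exact hN y hd
    | (d+2), hd =>
      have h2 : 1 < (Finset.univ.filter fun k => x k ≠ y k).card := by
        unfold hammingDist at hd; omega
      obtain ⟨i, hi, j, hj, hij⟩ := Finset.one_lt_card.mp h2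
      simp only [Finset.mem_filter, Finset.mem_univ, true_and] at hi hj
      set zi := Function.update y i (x i) with hzi
      set zj := Function.update y j (x j) with hzj
      set w := Function.update zi j (x j) with hw
      have zii : zi i = x i := by rw [hzi, Function.update_self]
      have zij : zi j = y j := by rw [hzi, Function.update_of_ne (Ne.symm hij)]
      have zik : ∀ k, k ≠ i → zi k = y k := by
        intro k hk; rw [hzi, Function.update_of_ne hk]
      have zji : zj i = y i := by rw [hzj, Function.update_of_ne hij]
      have zjj : zj j = x j := by rw [hzj, Function.update_self]
      have zjk : ∀ k, k ≠ j → zj k = y k := by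
        intro k hk; rw [hzj, Function.update_of_ne hk]
      have wi : w i = x i := by rw [hw, Function.update_of_ne hij, zii]
      have wj : w j = x j := by rw [hw, Function.update_self]
      have wk : ∀ k, k ≠ i → k ≠ j → w k = y k := by
        intro k hki hkj; rw [hw, Function.update_of_ne hkj, zik k hki]
      have hxzj : x j ≠ zi j := by rw [zij]; exact hj
      have dzi : hammingDist x zi + 1 = d + 2 := by rw [← hd, hzi]; exact dist_update x y i hi
      have dzj : hammingDist x zj + 1 = d + 2 := by rw [← hd, hzj]; exact dist_update x y j hj
      have dw : hammingDist x w + 1 = d + 1 := by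
        rw [hw]
        have h1 := dist_update x zi j hxzj
        omega
      have fzi : f zi = zi := ih (d+1) (by omega) zi (by omega)
      have fzj : f zj = zj := ih (d+1) (by omega) zj (by omega)
      have fw : f w = w := ih d (by omega) w (by omega)
      have ayi : (hammingGraph n m).Adj zi y := by rw [hzi]; exact dist_update_one x y i hi
      have ayj : (hammingGraph n m).Adj zj y := by rw [hzj]; exact dist_update_one x y j hj
      have afi : (hammingGraph n m).Adj zi (f y) := by
        have h1 := f.map_rel_iff.mpr ayi
        rwa [fzi] at h1
      have afj : (hammingGraph n m).Adj zj (f y) := by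
        have h1 := f.map_rel_iff.mpr ayj
        rwa [fzj] at h1
      set u := f y with hu
      obtain ⟨a, ha, huniqa⟩ := hammingDist_eq_one_iff.mp afi
      obtain ⟨b, hb, huniqb⟩ := hammingDist_eq_one_iff.mp afj
      have hcase : a = i ∨ a = j := by
        by_contra hc
        push_neg at hc
        obtain ⟨hai, haj⟩ := hc
        have e1 : zi i = u i := by
          by_contra h'; exact hai (huniqa i h').symm
        have hb' : a = b := by
          refine huniqb a ?_
          rw [zjk a haj, ← zik a hai]; exact ha
        have e2 : zj i = u i := by
          by_contra h'
          exact hai (hb'.trans (huniqb i h').symm)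
        rw [zii] at e1; rw [zji] at e2
        exact hi (e1.trans e2.symm)
      rcases hcase with hai | haj
      · -- a = i : u = y
        have huniqa' : ∀ k, zi k ≠ u k → k = i := fun k hk => (huniqa k hk).trans hai
        have uj : u j = y j := by
          by_contra h'
          refine hij (huniqa' j ?_).symm
          rw [zij]; exact fun e => h' e.symm
        have hbj : b = j := by
          refine (huniqb j ?_).symm
          rw [zjj, uj]; exact hj
        have ui : u i = y i := by
          by_contra h'
          refine hij ((huniqb i ?_).trans hbj)
          rw [zji]; exact fun e => h' e.symm
        have huy : u = y := by
          funext k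
          rcases eq_or_ne k i with rfl | hki
          · exact ui
          rcases eq_or_ne k j with rfl | hkj
          · exact uj
          by_contra h'
          refine hki (huniqa' k ?_)
          rw [zik k hki]; exact fun e => h' e.symm
        rw [hu] at huy; exact huy
      · -- a = j : u = w, contradiction
        have huniqa' : ∀ k, zi k ≠ u k → k = j := fun k hk => (huniqa k hk).trans haj
        have ui : u i = x i := by
          by_contra h'
          refine hij (huniqa' i ?_)
          rw [zii]; exact fun e => h' e.symm
        have hbi : b = i := by
          refine (huniqb i ?_).symm
          rw [zji, ui]; exact Ne.symm hi
        have uj : u j = x j := by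
          by_contra h'
          refine hij ((huniqb j ?_).trans hbi).symm
          rw [zjj]; exact fun e => h' e.symm
        have huw : u = w := by
          funext k
          rcases eq_or_ne k i with rfl | hki
          · exact ui.trans wi.symm
          rcases eq_or_ne k j with rfl | hkj
          · exact uj.trans wj.symm
          rw [wk k hki hkj]
          by_contra h'
          refine hkj (huniqa' k ?_)
          rw [zik k hki]; exact fun e => h' e.symm
        rw [hu] at huw
        have hyw : y = w := (EquivLike.injective f) (huw.trans fw.symm)
        exact (hj ((congrFun hyw j).trans wj).symm).elim

/-- For `m ≥ 3`, the stabilizer of a vertex `x` in `Aut(H(n,m))` embeds, via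
restriction to `N(x)`, into the automorphism group of the induced subgraph on
`N(x)`: the restriction map is an injective group homomorphism. -/
theorem hammingGraph_stabilizer_restriction (n m : ℕ) (hm : 3 ≤ m)
    (x : Fin n → Fin m) :
    ∃ φ : hammingStab n m x →*
        ((hammingGraph n m).induce ((hammingGraph n m).neighborSet x) ≃g
         (hammingGraph n m).induce ((hammingGraph n m).neighborSet x)),
      Function.Injective φ ∧
      ∀ (f : hammingStab n m x)
        (y : (hammingGraph n m).neighborSet x),
          ((φ f) y : Fin n → Fin m) = (f : hammingGraph n m ≃g hammingGraph n m) y := by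
  refine ⟨{
      toFun := fun f => {
        toFun := fun y => ⟨(f : hammingGraph n m ≃g hammingGraph n m) y, by
          have := (f : hammingGraph n m ≃g hammingGraph n m).map_rel_iff.mpr y.2
          rwa [f.2] at this⟩
        invFun := fun y => ⟨(f : hammingGraph n m ≃g hammingGraph n m).symm y, by
          have h2 : (f⁻¹ : hammingStab n m x).1 x = x := (f⁻¹).2
          have := (f⁻¹ : hammingStab n m x).1.map_rel_iff.mpr y.2
          rwa [h2] at this⟩
        left_inv := fun y => Subtype.ext
          ((f : hammingGraph n m ≃g hammingGraph n m).symm_apply_apply y)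
        right_inv := fun y => Subtype.ext
          ((f : hammingGraph n m ≃g hammingGraph n m).apply_symm_apply y)
        map_rel_iff' := fun {a b} =>
          (f : hammingGraph n m ≃g hammingGraph n m).map_rel_iff }
      map_one' := rfl
      map_mul' := fun a b => rfl }, ?_, ?_⟩
  · intro f g hfg
    have hagree : ∀ y : (hammingGraph n m).neighborSet x,
        (f : hammingGraph n m ≃g hammingGraph n m) y
          = (g : hammingGraph n m ≃g hammingGraph n m) y := by
      intro y
      have := congrArg (fun ψ => (ψ y : Fin n → Fin m)) hfg
      exact this
    set F := (f : hammingGraph n m ≃g hammingGraph n m)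
    set G := (g : hammingGraph n m ≃g hammingGraph n m)
    have key : ∀ y, F.trans G.symm y = y := by
      apply fix_all (F.trans G.symm) x
      · show G.symm (F x) = x
        rw [f.2]
        conv_lhs => rw [← g.2]
        exact G.symm_apply_apply x
      · intro y hy
        show G.symm (F y) = y
        rw [hagree ⟨y, hy⟩]
        exact G.symm_apply_apply y
    have : ∀ y, F y = G y := by
      intro y
      have h1 := key y
      have : G (G.symm (F y)) = G y := congrArg G h1
      rwa [G.apply_symm_apply] at this
    exact Subtype.ext (RelIso.ext this)
  · intro f y
    rfl
end

section
/- For n ≥ 2 and m ≥ 3, the automorphism group of the Hamming graph H(n,m) is isomorphic to the wreath product Sym(Fin m) wr Sym(Fin n), i.e., to the semidirect product (Sym(Fin m))^n ⋊ Sym(Fin n) where Sym(Fin n) permutes the coordinates. -/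
/-- The action of `Sym(ι)` on `ι`-indexed direct powers of a group `K`,
permuting the coordinates. -/
def permuteCoords {ι : Type*} {K : Type*} [Group K] : Equiv.Perm ι →* MulAut (ι → K) where
  toFun σ :=
    { Equiv.piCongrLeft' (fun _ => K) σ with
      map_mul' := fun f g => rfl }
  map_one' := by ext f i; rfl
  map_mul' σ τ := by ext f i; rfl

namespace HammingAut

open Finset Function

variable {n m : ℕ}

/-- The set of coordinates where `x` and `y` differ. -/
def D (x y : Fin n → Fin m) : Finset (Fin n) := Finset.univ.filter fun i => x i ≠ y i

lemma mem_D {x y : Fin n → Fin m} {i : Fin n} : i ∈ D x y ↔ x i ≠ y i := by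
  simp [D]

lemma not_mem_D {x y : Fin n → Fin m} {i : Fin n} : i ∉ D x y ↔ x i = y i := by
  simp [D]

lemma D_comm (x y : Fin n → Fin m) : D y x = D x y := by
  ext i; simp only [mem_D]; exact ne_comm

lemma adj_iff {x y : Fin n → Fin m} :
    (hammingGraph n m).Adj x y ↔ ∃ k, D x y = {k} := by
  show hammingDist x y = 1 ↔ _
  rw [show hammingDist x y = (D x y).card from rfl, Finset.card_eq_one]

lemma D_eq_empty {x y : Fin n → Fin m} : D x y = ∅ ↔ x = y := by
  simp [D, Finset.filter_eq_empty_iff, funext_iff]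

lemma eq_off {x y : Fin n → Fin m} {k : Fin n} (h : D x y = {k}) {j : Fin n}
    (hj : j ≠ k) : x j = y j := by
  by_contra hne
  exact hj (Finset.mem_singleton.mp (h ▸ mem_D.mpr hne))

lemma mem_of_D_singleton {x y : Fin n → Fin m} {k : Fin n} (h : D x y = {k}) :
    x k ≠ y k :=
  mem_D.mp (by rw [h]; exact Finset.mem_singleton_self k)

lemma D_update {x : Fin n → Fin m} {i : Fin n} {a : Fin m} (ha : a ≠ x i) :
    D x (update x i a) = {i} := by
  ext j
  simp only [mem_D, Finset.mem_singleton]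
  rcases eq_or_ne j i with rfl | hne
  · simp [update_self, ha.symm]
  · simp [update_of_ne hne, hne]

lemma D_update_update {x : Fin n → Fin m} {i : Fin n} {a b : Fin m} (hab : a ≠ b) :
    D (update x i a) (update x i b) = {i} := by
  ext j
  simp only [mem_D, Finset.mem_singleton]
  rcases eq_or_ne j i with rfl | hne
  · simp [update_self, hab]
  · simp [update_of_ne hne, hne]

lemma eq_update_of_D {x y : Fin n → Fin m} {k : Fin n} (h : D x y = {k}) :
    y = update x k (y k) := by
  funext j
  rcases eq_or_ne j k with rfl | hne
  · rw [update_self]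
  · rw [update_of_ne hne, ← eq_off h hne]

lemma D_subset_union (x y z : Fin n → Fin m) : D x z ⊆ D x y ∪ D y z := by
  intro j hj
  rw [mem_D] at hj
  rw [Finset.mem_union, mem_D, mem_D]
  by_contra hc
  push_neg at hc
  obtain ⟨h1, h2⟩ := hc
  exact hj (h1.trans h2)

/-- Triangle lemma: in a triangle, all three pairs differ in the same coordinate. -/
lemma triangle {x y z : Fin n → Fin m} {i j : Fin n}
    (hxy : D x y = {i}) (hyz : D y z = {j}) (hxz : ∃ k, D x z = {k}) : i = j := by
  by_contra hij
  obtain ⟨k, hk⟩ := hxz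
  have hi : i ∈ D x z := by
    rw [mem_D]
    have h1 : x i ≠ y i := mem_of_D_singleton hxy
    have h2 : y i = z i := eq_off hyz hij
    rw [← h2]; exact h1
  have hj' : j ∈ D x z := by
    rw [mem_D]
    have h1 : x j = y j := eq_off hxy (Ne.symm hij)
    have h2 : y j ≠ z j := mem_of_D_singleton hyz
    rw [h1]; exact h2
  rw [hk, Finset.mem_singleton] at hi hj'
  exact hij (hi.trans hj'.symm)

section Phi

/-- The action of the wreath product on vertices. -/
def act (g : (Fin n → Equiv.Perm (Fin m)) ⋊[permuteCoords] Equiv.Perm (Fin n))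
    (x : Fin n → Fin m) : Fin n → Fin m := fun i => g.left i (x (g.right⁻¹ i))

lemma act_one (x : Fin n → Fin m) : act 1 x = x := rfl

lemma act_mul (g h : (Fin n → Equiv.Perm (Fin m)) ⋊[permuteCoords] Equiv.Perm (Fin n))
    (x : Fin n → Fin m) : act (g * h) x = act g (act h x) := by
  funext i
  show ((g.left * permuteCoords g.right h.left) i) (x ((g.right * h.right)⁻¹ i)) = _
  have : (g.right * h.right)⁻¹ i = h.right⁻¹ (g.right⁻¹ i) := by
    rw [mul_inv_rev]; rfl
  rw [this]
  rfl

lemma D_act (g : (Fin n → Equiv.Perm (Fin m)) ⋊[permuteCoords] Equiv.Perm (Fin n))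
    (x y : Fin n → Fin m) :
    D (act g x) (act g y) = (D x y).map g.right.toEmbedding := by
  ext i
  rw [Finset.mem_map_equiv, mem_D, mem_D]
  show ¬ g.left i (x (g.right⁻¹ i)) = g.left i (y (g.right⁻¹ i)) ↔ _
  rw [(g.left i).injective.eq_iff]
  rfl

lemma hammingDist_act (g : (Fin n → Equiv.Perm (Fin m)) ⋊[permuteCoords] Equiv.Perm (Fin n))
    (x y : Fin n → Fin m) : hammingDist (act g x) (act g y) = hammingDist x y := by
  show (D (act g x) (act g y)).card = (D x y).card
  rw [D_act, Finset.card_map]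

/-- The wreath product acting as graph automorphisms. -/
def Phi (n m : ℕ) :
    ((Fin n → Equiv.Perm (Fin m)) ⋊[permuteCoords] Equiv.Perm (Fin n)) →*
      (hammingGraph n m ≃g hammingGraph n m) where
  toFun g :=
    { toFun := act g
      invFun := act g⁻¹
      left_inv := fun x => by rw [← act_mul, inv_mul_cancel, act_one]
      right_inv := fun x => by rw [← act_mul, mul_inv_cancel, act_one]
      map_rel_iff' := by
        intro x y
        show hammingDist (act g x) (act g y) = 1 ↔ hammingDist x y = 1
        rw [hammingDist_act] }
  map_one' := RelIso.ext fun x => rfl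
  map_mul' g h := RelIso.ext fun x => act_mul g h x

lemma Phi_apply (g : (Fin n → Equiv.Perm (Fin m)) ⋊[permuteCoords] Equiv.Perm (Fin n))
    (x : Fin n → Fin m) : Phi n m g x = act g x := rfl

end Phi

section Inj

lemma Phi_injective [Nontrivial (Fin m)] : Function.Injective (Phi n m) := by
  rw [injective_iff_map_eq_one]
  intro g hg
  have hx : ∀ x, act g x = x := fun x => DFunLike.congr_fun hg x
  have hleft : ∀ i c, g.left i c = c := by
    intro i c
    have := congrFun (hx fun _ => c) i
    exact this
  have hright : ∀ i, g.right⁻¹ i = i := by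
    intro i
    by_contra hne
    obtain ⟨a, b, hab⟩ := exists_pair_ne (Fin m)
    have h3 := congrFun (hx fun j => if j = i then a else b) i
    simp only [act, hleft] at h3
    rw [if_neg hne] at h3
    simp at h3
    exact hab h3.symm
  have hfix : ∀ i, g.right i = i := by
    intro i
    conv_lhs => rw [← hright i]
    exact g.right.apply_symm_apply i
  have hr : g.right = 1 := Equiv.ext fun i => hfix i
  have hl : g.left = 1 := by
    funext i
    exact Equiv.ext fun c => hleft i c
  exact SemidirectProduct.ext hl hr

end Inj

section Surj

variable [Nontrivial (Fin m)] (φ : hammingGraph n m ≃g hammingGraph n m)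

lemma D_phi_adj {x y : Fin n → Fin m} (h : ∃ k, D x y = {k}) :
    ∃ k, D (φ x) (φ y) = {k} :=
  adj_iff.mp (φ.map_rel_iff.mpr (adj_iff.mpr h))

lemma exists_tau (x : Fin n → Fin m) (i : Fin n) :
    ∃ k, ∀ a, a ≠ x i → D (φ x) (φ (update x i a)) = {k} := by
  obtain ⟨a₀, ha₀⟩ := exists_ne (x i)
  obtain ⟨k, hk⟩ := D_phi_adj φ ⟨i, D_update ha₀⟩
  refine ⟨k, fun a ha => ?_⟩
  rcases eq_or_ne a a₀ with rfl | hne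
  · exact hk
  obtain ⟨k', hk'⟩ := D_phi_adj φ ⟨i, D_update ha⟩
  have h1 : D (update x i a₀) (update x i a) = {i} := D_update_update (Ne.symm hne)
  obtain ⟨k'', hk''⟩ := D_phi_adj φ ⟨i, h1⟩
  have hkk' : k = k' := by
    refine triangle (x := φ (update x i a₀)) (y := φ x) (z := φ (update x i a))
      ?_ hk' ⟨k'', hk''⟩
    rw [D_comm]; exact hk
  rw [hk', hkk']

/-- The coordinate map induced by `φ` at base point `x`. -/
noncomputable def tau (x : Fin n → Fin m) (i : Fin n) : Fin n :=
  (exists_tau φ x i).choose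

lemma tau_spec {x y : Fin n → Fin m} {i : Fin n} (h : D x y = {i}) :
    D (φ x) (φ y) = {tau φ x i} := by
  have hne : y i ≠ x i := (mem_of_D_singleton h).symm
  have := (exists_tau φ x i).choose_spec (y i) hne
  rwa [← eq_update_of_D h] at this

lemma tau_injective (x : Fin n → Fin m) : Function.Injective (tau φ x) := by
  intro i k hik
  by_contra hne
  obtain ⟨a, ha⟩ := exists_ne (x i)
  obtain ⟨b, hb⟩ := exists_ne (x k)
  have h1 : D (φ x) (φ (update x i a)) = {tau φ x i} := tau_spec φ (D_update ha)
  have h2 : D (φ x) (φ (update x k b)) = {tau φ x i} := by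
    rw [hik]; exact tau_spec φ (D_update hb)
  have hsub : D (φ (update x i a)) (φ (update x k b)) ⊆ {tau φ x i} := by
    intro j hj
    rw [mem_D] at hj
    rw [Finset.mem_singleton]
    by_contra hji
    have e1 : φ x j = φ (update x i a) j := eq_off h1 hji
    have e2 : φ x j = φ (update x k b) j := eq_off h2 hji
    exact hj (e1.symm.trans e2)
  have hDik : D (update x i a) (update x k b) = {i, k} := by
    ext j
    simp only [mem_D, Finset.mem_insert, Finset.mem_singleton]
    constructor
    · intro hj
      by_contra hc
      push_neg at hc
      obtain ⟨hji, hjk⟩ := hc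
      rw [update_of_ne hji, update_of_ne hjk] at hj
      exact hj rfl
    · rintro (rfl | rfl)
      · rw [update_self, update_of_ne hne]
        exact fun hc => ha hc
      · rw [update_of_ne (fun hc => hne hc.symm), update_self]
        exact fun hc => hb hc.symm
  rcases Finset.subset_singleton_iff.mp hsub with hemp | hsing
  · have : φ (update x i a) = φ (update x k b) := D_eq_empty.mp hemp
    have heq : update x i a = update x k b := φ.injective this
    have : update x i a k = update x k b k := congrFun heq k
    rw [update_of_ne (Ne.symm hne), update_self] at this
    exact hb this.symm
  · have hadj : (hammingGraph n m).Adj (update x i a) (update x k b) :=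
      φ.map_rel_iff.mp (adj_iff.mpr ⟨_, hsing⟩)
    obtain ⟨k', hk'⟩ := adj_iff.mp hadj
    rw [hDik] at hk'
    have hi : i ∈ ({k'} : Finset (Fin n)) := hk' ▸ Finset.mem_insert_self i {k}
    have hk2 : k ∈ ({k'} : Finset (Fin n)) := hk' ▸ Finset.mem_insert_of_mem
      (Finset.mem_singleton_self k)
    rw [Finset.mem_singleton] at hi hk2
    exact hne (hi.trans hk2.symm)

lemma tau_diag_eq {x y : Fin n → Fin m} {k : Fin n} (h : D x y = {k}) :
    tau φ x k = tau φ y k := by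
  have h1 : D (φ x) (φ y) = {tau φ x k} := tau_spec φ h
  have h2 : D (φ y) (φ x) = {tau φ y k} := tau_spec φ (by rw [D_comm]; exact h)
  rw [D_comm] at h2
  rw [h1] at h2
  exact Finset.singleton_injective h2

lemma tau_adj_eq {x y : Fin n → Fin m} {k : Fin n} (h : D x y = {k}) :
    tau φ x = tau φ y := by
  funext i
  rcases eq_or_ne i k with rfl | hik
  · exact tau_diag_eq φ h
  -- i ≠ k
  have hxyi : x i = y i := eq_off h hik
  obtain ⟨a, ha⟩ := exists_ne (x i)
  set x' := update x i a with hx'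
  set y' := update y i a with hy'
  have hxx' : D x x' = {i} := D_update ha
  have hyy' : D y y' = {i} := D_update (by rw [← hxyi]; exact ha)
  set p := tau φ x i with hp
  set q := tau φ y i with hq
  set r := tau φ x k with hr
  have hDxx' : D (φ x) (φ x') = {p} := tau_spec φ hxx'
  have hDyy' : D (φ y) (φ y') = {q} := tau_spec φ hyy'
  have hDxy : D (φ x) (φ y) = {r} := tau_spec φ h
  have hx'y' : D x' y' = {k} := by
    ext j
    simp only [mem_D, Finset.mem_singleton, hx', hy']
    constructor
    · intro hj
      by_contra hjk
      rcases eq_or_ne j i with rfl | hji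
      · rw [update_self, update_self] at hj
        exact hj rfl
      · rw [update_of_ne hji, update_of_ne hji] at hj
        exact hj (eq_off h hjk)
    · intro hj
      subst hj
      rw [update_of_ne (Ne.symm hik), update_of_ne (Ne.symm hik)]
      exact mem_of_D_singleton h
  set r' := tau φ x' k with hr'
  have hDx'y' : D (φ x') (φ y') = {r'} := tau_spec φ hx'y'
  have hxy' : D x y' = {i, k} := by
    ext j
    simp only [mem_D, Finset.mem_insert, Finset.mem_singleton, hy']
    constructor
    · intro hj
      by_contra hc
      push_neg at hc
      obtain ⟨hji, hjk⟩ := hc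
      rw [update_of_ne hji] at hj
      exact hj (eq_off h hjk)
    · rintro (rfl | rfl)
      · rw [update_self]
        exact fun hc => ha hc.symm
      · rw [update_of_ne (Ne.symm hik)]
        exact mem_of_D_singleton h
  -- x and y' are at distance 2
  have hxney' : φ x ≠ φ y' := by
    intro hc
    have hxy'eq : x = y' := φ.injective hc
    have h5 := congrFun hxy'eq i
    rw [hy', update_self] at h5
    exact ha h5.symm
  have hnadj : ¬ (hammingGraph n m).Adj (φ x) (φ y') := by
    rw [φ.map_rel_iff, adj_iff]
    rintro ⟨k', hk'⟩
    rw [hxy'] at hk'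
    have hi : i ∈ ({k'} : Finset (Fin n)) := hk' ▸ Finset.mem_insert_self i {k}
    have hk2 : k ∈ ({k'} : Finset (Fin n)) := hk' ▸ Finset.mem_insert_of_mem
      (Finset.mem_singleton_self k)
    rw [Finset.mem_singleton] at hi hk2
    exact hik (hi.trans hk2.symm)
  have hcard2 : 2 ≤ (D (φ x) (φ y')).card := by
    rcases Nat.lt_or_ge (D (φ x) (φ y')).card 2 with hlt | hge
    · interval_cases hc : (D (φ x) (φ y')).card
      · exact absurd (D_eq_empty.mp (Finset.card_eq_zero.mp hc)) hxney'
      · exact absurd (adj_iff.mpr (Finset.card_eq_one.mp hc)) hnadj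
    · exact hge
  have hsub1 : D (φ x) (φ y') ⊆ {r, q} := by
    refine (D_subset_union (φ x) (φ y) (φ y')).trans ?_
    rw [hDxy, hDyy']
    intro j hj
    simpa using hj
  have hsub2 : D (φ x) (φ y') ⊆ {p, r'} := by
    refine (D_subset_union (φ x) (φ x') (φ y')).trans ?_
    rw [hDxx', hDx'y']
    intro j hj
    simpa using hj
  have h2le1 : ({r, q} : Finset (Fin n)).card ≤ 2 :=
    (Finset.card_insert_le r {q}).trans (by simp)
  have h2le2 : ({p, r'} : Finset (Fin n)).card ≤ 2 :=
    (Finset.card_insert_le p {r'}).trans (by simp)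
  have heq1 : D (φ x) (φ y') = {r, q} :=
    Finset.eq_of_subset_of_card_le hsub1 (h2le1.trans hcard2)
  have heq2 : D (φ x) (φ y') = {p, r'} :=
    Finset.eq_of_subset_of_card_le hsub2 (h2le2.trans hcard2)
  have hpr : p ≠ r := fun hc => hik (tau_injective φ x hc)
  have hpmem : p ∈ ({r, q} : Finset (Fin n)) := by
    rw [← heq1, heq2]; exact Finset.mem_insert_self p {r'}
  rcases Finset.mem_insert.mp hpmem with hc | hc
  · exact absurd hc hpr
  · exact Finset.mem_singleton.mp hc

lemma tau_const (x y : Fin n → Fin m) : tau φ x = tau φ y := by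
  have key : ∀ N x y, (D x y).card = N → tau φ (x : Fin n → Fin m) = tau φ y := by
    intro N
    induction N with
    | zero =>
      intro x y h
      rw [Finset.card_eq_zero, D_eq_empty] at h
      rw [h]
    | succ N ih =>
      intro x y h
      have hpos : 0 < (D x y).card := by omega
      obtain ⟨k, hk⟩ := Finset.card_pos.mp hpos
      have hne := mem_D.mp hk
      set x' := update x k (y k) with hx'
      have h1 : D x x' = {k} := D_update (Ne.symm hne)
      have h2 : D x' y = (D x y).erase k := by
        ext j
        simp only [mem_D, Finset.mem_erase, hx']
        rcases eq_or_ne j k with rfl | hjk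
        · simp [update_self]
        · simp [update_of_ne hjk, hjk, mem_D]
      have hcard : (D x' y).card = N := by
        rw [h2, Finset.card_erase_of_mem hk, h]
        omega
      rw [tau_adj_eq φ h1]
      exact ih x' y hcard
  exact key _ x y rfl

/-- The full structure lemma: `φ` maps difference sets to their image under the
coordinate permutation. -/
lemma D_phi (z : Fin n → Fin m) (x y : Fin n → Fin m) :
    D (φ x) (φ y) = (D x y).image (tau φ z) := by
  have key : ∀ N x y, (D x y).card = N →
      D (φ (x : Fin n → Fin m)) (φ y) = (D x y).image (tau φ z) := by
    intro N
    induction N with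
    | zero =>
      intro x y h
      rw [Finset.card_eq_zero, D_eq_empty] at h
      subst h
      rw [show D (φ x) (φ x) = ∅ from D_eq_empty.mpr rfl,
        show D x x = ∅ from D_eq_empty.mpr rfl, Finset.image_empty]
    | succ N ih =>
      intro x y h
      have hpos : 0 < (D x y).card := by omega
      obtain ⟨k, hk⟩ := Finset.card_pos.mp hpos
      have hne := mem_D.mp hk
      set t := tau φ z with ht
      have htinj : Function.Injective t := tau_injective φ z
      set x' := update x k (y k) with hx'
      have h1 : D x x' = {k} := D_update (Ne.symm hne)
      have hDφ1 : D (φ x) (φ x') = {t k} := by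
        rw [ht, tau_const φ z x]; exact tau_spec φ h1
      have h2 : D x' y = (D x y).erase k := by
        ext j
        simp only [mem_D, Finset.mem_erase, hx']
        rcases eq_or_ne j k with rfl | hjk
        · simp [update_self]
        · simp [update_of_ne hjk, hjk, mem_D]
      have hcard : (D x' y).card = N := by
        rw [h2, Finset.card_erase_of_mem hk, h]
        omega
      have hIH : D (φ x') (φ y) = ((D x y).erase k).image t := by
        rw [← h2]; exact ih x' y hcard
      have himg : (D x y).image t = insert (t k) (((D x y).erase k).image t) := by
        conv_lhs => rw [← Finset.insert_erase hk]
        rw [Finset.image_insert]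
      rw [himg]
      ext j
      constructor
      · intro hj
        have hj' := mem_D.mp hj
        rcases eq_or_ne j (t k) with rfl | hjtk
        · exact Finset.mem_insert_self _ _
        · have e1 : φ x j = φ x' j := eq_off hDφ1 hjtk
          have : j ∈ D (φ x') (φ y) := mem_D.mpr (by rw [← e1]; exact hj')
          rw [hIH] at this
          exact Finset.mem_insert_of_mem this
      · intro hj
        rcases Finset.mem_insert.mp hj with rfl | hj'
        · have hnotmem : t k ∉ ((D x y).erase k).image t := by
            rw [Finset.mem_image]
            rintro ⟨j', hj', hj'eq⟩
            exact (Finset.mem_erase.mp hj').1 (htinj hj'eq)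
          have e2 : φ x' (t k) = φ y (t k) := not_mem_D.mp (by rw [hIH]; exact hnotmem)
          have e1 : φ x (t k) ≠ φ x' (t k) := mem_of_D_singleton hDφ1
          exact mem_D.mpr (by rw [← e2]; exact e1)
        · obtain ⟨j', hj'mem, rfl⟩ := Finset.mem_image.mp hj'
          have hjtk : t j' ≠ t k := fun hc =>
            (Finset.mem_erase.mp hj'mem).1 (htinj hc)
          have e1 : φ x (t j') = φ x' (t j') := eq_off hDφ1 hjtk
          have e2 : φ x' (t j') ≠ φ y (t j') := mem_D.mp (by rw [hIH]; exact hj')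
          exact mem_D.mpr (by rw [e1]; exact e2)
  exact key _ x y rfl

lemma Phi_surjective : Function.Surjective (Phi n m) := by
  intro φ
  have hm : Nonempty (Fin m) := inferInstance
  obtain ⟨c⟩ := hm
  set z : Fin n → Fin m := fun _ => c with hz
  set t := tau φ z with ht
  have htinj : Function.Injective t := tau_injective φ z
  have hD := D_phi φ z
  let σ : Equiv.Perm (Fin n) := Equiv.ofBijective t (Finite.injective_iff_bijective.mp htinj)
  have hσ : ∀ i, σ i = t i := fun i => rfl
  -- values at coordinate t i depend only on x i
  have gkey : ∀ x y : Fin n → Fin m, ∀ i, x i = y i → φ x (t i) = φ y (t i) := by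
    intro x y i hxy
    by_contra hne
    have hmem : t i ∈ D (φ x) (φ y) := mem_D.mpr hne
    rw [hD] at hmem
    obtain ⟨j, hj, hji⟩ := Finset.mem_image.mp hmem
    have : j = i := htinj hji
    subst this
    exact (mem_D.mp hj) hxy
  have ginj : ∀ i, Function.Injective (fun a => φ (update z i a) (t i)) := by
    intro i a b hab
    by_contra hne
    have h1 : D (update z i a) (update z i b) = {i} := D_update_update hne
    have h2 : D (φ (update z i a)) (φ (update z i b)) = {t i} := by
      rw [hD, h1, Finset.image_singleton]
    exact (mem_of_D_singleton h2) hab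
  let g : Fin n → Equiv.Perm (Fin m) := fun j =>
    Equiv.ofBijective _ (Finite.injective_iff_bijective.mp (ginj (σ⁻¹ j)))
  refine ⟨⟨g, σ⟩, ?_⟩
  apply RelIso.ext
  intro x
  funext j
  have hact : Phi n m ⟨g, σ⟩ x j = g j (x (σ⁻¹ j)) := rfl
  rw [hact]
  have hg : g j (x (σ⁻¹ j)) = φ (update z (σ⁻¹ j) (x (σ⁻¹ j))) (t (σ⁻¹ j)) := rfl
  rw [hg]
  have hkey := gkey (update z (σ⁻¹ j) (x (σ⁻¹ j))) x (σ⁻¹ j) (by rw [update_self])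
  rw [hkey]
  have : t (σ⁻¹ j) = j := by
    rw [← hσ]
    exact σ.apply_symm_apply j
  rw [this]

end Surj

end HammingAut

/-- For `n ≥ 2` and `m ≥ 3`, `Aut(H(n,m))` is isomorphic to the wreath product
`Sym(Fin m) wr Sym(Fin n) = (Sym(Fin m))^n ⋊ Sym(Fin n)`. -/
theorem hammingGraph_aut_iso_wreath (n m : ℕ) (hn : 2 ≤ n) (hm : 3 ≤ m) :
    Nonempty ((hammingGraph n m ≃g hammingGraph n m) ≃*
      ((Fin n → Equiv.Perm (Fin m)) ⋊[permuteCoords] Equiv.Perm (Fin n))) := by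
  haveI : Nontrivial (Fin m) := Fin.nontrivial_iff_two_le.mpr (by omega)
  exact ⟨(MulEquiv.ofBijective (HammingAut.Phi n m)
    ⟨HammingAut.Phi_injective, HammingAut.Phi_surjective⟩).symm⟩
end
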